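/- Let $M$ be an invertible $k \times k$ complex matrix with smallest singular value $\sigma > 0$, and let $E$ be a $k \times k$ complex matrix with operator norm $\|E\| \le \sigma / (2k)$. Then $\frac{1}{2} \le \frac{|\det M|}{|\det(M+E)|} \le 2$. -/

import Mathlib

open Matrix Polynomial

lemma norm_mulVec_lb {k : ℕ} (M : Matrix (Fin k) (Fin k) ℂ) (σ : ℝ)
    (hσ : σ = ⨅ i, Real.sqrt ((Matrix.isHermitian_conjTranspose_mul_self M).eigenvalues i))
    (hσpos : 0 < σ) (x : EuclideanSpace ℂ (Fin k)) :
    σ * ‖x‖ ≤ ‖Matrix.toEuclideanCLM (𝕜 := ℂ) M x‖ := by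
  classical
  have hA : (Mᴴ * M).IsHermitian := Matrix.isHermitian_conjTranspose_mul_self M
  have hS : (Matrix.toEuclideanLin (Mᴴ * M)).IsSymmetric :=
    Matrix.isSymmetric_toEuclideanLin_iff.mpr hA
  set hn : Module.finrank ℂ (EuclideanSpace ℂ (Fin k)) = Fintype.card (Fin k) :=
    finrank_euclideanSpace with hn_def
  have key : ∀ j, σ ^ 2 ≤ hS.eigenvalues hn j := by
    intro j
    have h1 : σ ≤ Real.sqrt (hA.eigenvalues (Fintype.equivOfCardEq (Fintype.card_fin _) j)) := by
      rw [hσ]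
      exact ciInf_le (Set.Finite.bddBelow (Set.finite_range _)) _
    have h2 : hA.eigenvalues (Fintype.equivOfCardEq (Fintype.card_fin _) j) =
        hS.eigenvalues hn j := by
      simp [Matrix.IsHermitian.eigenvalues, Matrix.IsHermitian.eigenvalues₀]
    rw [h2] at h1
    have h3 : 0 < Real.sqrt (hS.eigenvalues hn j) := lt_of_lt_of_le hσpos h1
    have h4 : 0 ≤ hS.eigenvalues hn j := by
      by_contra h
      push_neg at h
      rw [Real.sqrt_eq_zero_of_nonpos h.le] at h3
      exact lt_irrefl 0 h3
    calc σ ^ 2 ≤ Real.sqrt (hS.eigenvalues hn j) ^ 2 := pow_le_pow_left₀ hσpos.le h1 2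
      _ = hS.eigenvalues hn j := Real.sq_sqrt h4
  set b := hS.eigenvectorBasis hn with hb
  set T := Matrix.toEuclideanCLM (𝕜 := ℂ) M with hT
  -- ‖T x‖ ^ 2 = re ⟪x, (MᴴM) x⟫
  have hinner : (inner ℂ (T x) (T x) : ℂ) = inner ℂ x (Matrix.toEuclideanCLM (𝕜 := ℂ) (Mᴴ * M) x) := by
    have h : Matrix.toEuclideanCLM (𝕜 := ℂ) (Mᴴ * M)
        = star T * T := by
      rw [_root_.map_mul]
      congr 1
      rw [← map_star (Matrix.toEuclideanCLM (𝕜 := ℂ))]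
      rfl
    rw [h, ContinuousLinearMap.mul_apply, ContinuousLinearMap.star_eq_adjoint,
      ContinuousLinearMap.adjoint_inner_right]
  have hclm : Matrix.toEuclideanCLM (𝕜 := ℂ) (Mᴴ * M) x = Matrix.toEuclideanLin (Mᴴ * M) x := by
    rw [← Matrix.coe_toEuclideanCLM_eq_toEuclideanLin]
    rfl
  -- expand in eigenbasis
  have hsum : Complex.re (inner ℂ x (Matrix.toEuclideanLin (Mᴴ * M) x) : ℂ)
      = ∑ j, hS.eigenvalues hn j * Complex.normSq (b.repr x j) := by
    rw [← b.repr.inner_map_map x (Matrix.toEuclideanLin (Mᴴ * M) x)]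
    rw [PiLp.inner_apply]
    rw [Complex.re_sum]
    apply Finset.sum_congr rfl
    intro j _
    rw [hS.eigenvectorBasis_apply_self_apply hn x j, RCLike.inner_apply]
    have hc : ∀ (c : ℂ) (μ : ℝ), ((starRingEnd ℂ) c * ((μ : ℂ) * c)).re = μ * Complex.normSq c := by
      intro c μ
      simp [Complex.normSq_apply, Complex.mul_re, Complex.mul_im]
      ring
    rw [mul_comm]
    exact hc _ _
  have hnorm2 : ∑ j, Complex.normSq (b.repr x j) = ‖x‖ ^ 2 := by
    rw [← b.repr.norm_map x, EuclideanSpace.norm_eq, Real.sq_sqrt (by positivity)]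
    congr 1
    ext j
    rw [Complex.normSq_eq_norm_sq]
  have hge : σ ^ 2 * ‖x‖ ^ 2 ≤ ‖T x‖ ^ 2 := by
    have h5 : Complex.re (inner ℂ (T x) (T x) : ℂ) = ‖T x‖ ^ 2 := by
      rw [← RCLike.re_to_complex, inner_self_eq_norm_sq]
    rw [← h5, hinner, hclm, hsum, ← hnorm2, Finset.mul_sum]
    apply Finset.sum_le_sum
    intro j _
    exact mul_le_mul_of_nonneg_right (key j) (Complex.normSq_nonneg _)
  have := Real.sqrt_le_sqrt hge
  rwa [Real.sqrt_mul (by positivity), Real.sqrt_sq hσpos.le, Real.sqrt_sq (norm_nonneg _),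
    Real.sqrt_sq (norm_nonneg _)] at this

open Polynomial in
lemma eval_charpoly' {k : ℕ} (N : Matrix (Fin k) (Fin k) ℂ) (t : ℂ) :
    N.charpoly.eval t = (t • (1 : Matrix (Fin k) (Fin k) ℂ) - N).det := by
  rw [Matrix.charpoly, ← Polynomial.coe_evalRingHom, RingHom.map_det]
  congr 1
  ext i j
  simp [Matrix.charmatrix_apply, Matrix.map_apply, Matrix.smul_apply, Matrix.one_apply,
    Matrix.diagonal_apply, apply_ite]

lemma prod_bounds (a b : ℝ) (ha : 0 ≤ a) : ∀ (s : Multiset ℝ), (∀ x ∈ s, a ≤ x ∧ x ≤ b) →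
    a ^ Multiset.card s ≤ s.prod ∧ s.prod ≤ b ^ Multiset.card s := by
  intro s
  induction s using Multiset.induction with
  | empty => simp
  | cons y t ih =>
    intro h
    have hy := h y (Multiset.mem_cons_self y t)
    have ht := ih (fun x hx => h x (Multiset.mem_cons_of_mem hx))
    simp only [Multiset.prod_cons, Multiset.card_cons]
    have htp : (0:ℝ) ≤ t.prod := le_trans (pow_nonneg ha _) ht.1
    constructor
    · rw [pow_succ']
      exact mul_le_mul hy.1 ht.1 (pow_nonneg ha _) (le_trans ha hy.1)
    · rw [pow_succ']
      exact mul_le_mul hy.2 ht.2 htp (le_trans (le_trans ha hy.1) hy.2)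

theorem stmt12 (k : ℕ) (hk : 0 < k) (M E : Matrix (Fin k) (Fin k) ℂ) (σ : ℝ)
    (hM : IsUnit M.det)
    (hσ : σ = ⨅ i, Real.sqrt ((Matrix.isHermitian_conjTranspose_mul_self M).eigenvalues i))
    (hσpos : 0 < σ)
    (hE : ‖Matrix.toEuclideanCLM (𝕜 := ℂ) E‖ ≤ σ / (2 * k)) :
    1 / 2 ≤ ‖M.det‖ / ‖(M + E).det‖ ∧
      ‖M.det‖ / ‖(M + E).det‖ ≤ 2 := by
  classical
  set N := M⁻¹ * E with hN
  set R := N.charpoly.roots with hR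
  set d : ℝ := 1 / (2 * k) with hd
  have hk' : (0:ℝ) < k := by exact_mod_cast hk
  have hd_pos : 0 < d := by positivity
  have hd_half : d ≤ 1/2 := by
    have hk1 : (1:ℝ) ≤ k := by exact_mod_cast hk
    rw [hd, div_le_div_iff₀ (by positivity) (by norm_num)]
    nlinarith
  -- number of roots
  have hcard : Multiset.card R = k := by
    rw [hR, Polynomial.splits_iff_card_roots.mp (IsAlgClosed.splits N.charpoly),
      Matrix.charpoly_natDegree_eq_dim, Fintype.card_fin]
  -- det (M + E) = det M * det (1 + N)
  have hdet : (M + E).det = M.det * (1 + N).det := by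
    rw [← Matrix.det_mul]
    congr 1
    rw [mul_add, mul_one, Matrix.mul_nonsing_inv_cancel_left _ _ hM]
  -- |det (1 + N)| as a product over roots
  have habs1N : ‖(1 + N).det‖ = (R.map (fun μ => ‖1 + μ‖)).prod := by
    have hfac : N.charpoly = (R.map (fun a => X - C a)).prod :=
      Polynomial.Splits.eq_prod_roots_of_monic (IsAlgClosed.splits N.charpoly)
        N.charpoly_monic
    have he : N.charpoly.eval (-1) = (-1 : ℂ) ^ k * (1 + N).det := by
      rw [eval_charpoly']
      have : (-1 : ℂ) • (1 : Matrix (Fin k) (Fin k) ℂ) - N = -(1 + N) := by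
        rw [neg_one_smul, sub_eq_add_neg, neg_add]
      rw [this, Matrix.det_neg, Fintype.card_fin]
    have he2 : ‖(1 + N).det‖ = ‖N.charpoly.eval (-1)‖ := by
      rw [he, norm_mul, norm_pow, norm_neg, norm_one, one_pow, one_mul]
    rw [he2, hfac, Polynomial.eval_multiset_prod, Multiset.map_map,
      (fun m : Multiset ℂ => show ‖m.prod‖ = (m.map (‖·‖)).prod from map_multiset_prod (normHom (α := ℂ)) m), Multiset.map_map]
    congr 1
    apply Multiset.map_congr rfl
    intro a _
    simp only [Function.comp_apply, Polynomial.eval_sub, Polynomial.eval_X, Polynomial.eval_C]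
    rw [show (-1 : ℂ) - a = -(1 + a) by ring, norm_neg]
  -- each root is small
  have hroot : ∀ μ ∈ R, ‖μ‖ ≤ d := by
    intro μ hμ
    have hroot0 : N.charpoly.eval μ = 0 := (Polynomial.mem_roots'.mp hμ).2
    have hdet0 : (μ • (1 : Matrix (Fin k) (Fin k) ℂ) - N).det = 0 := by
      rw [← eval_charpoly']; exact hroot0
    obtain ⟨v, hv0, hv⟩ := (Matrix.exists_mulVec_eq_zero_iff).mpr hdet0
    have hNv : N *ᵥ v = μ • v := by
      have := hv
      rw [Matrix.sub_mulVec, Matrix.smul_mulVec, Matrix.one_mulVec, sub_eq_zero] at this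
      exact this.symm
    have hEv : E *ᵥ v = μ • (M *ᵥ v) := by
      have h1 : M *ᵥ (N *ᵥ v) = E *ᵥ v := by
        rw [Matrix.mulVec_mulVec, Matrix.mul_nonsing_inv_cancel_left _ _ hM]
      rw [← h1, hNv, Matrix.mulVec_smul]
    set x : EuclideanSpace ℂ (Fin k) := (WithLp.equiv 2 (Fin k → ℂ)).symm v with hx
    have hx0 : x ≠ 0 := by
      simp only [hx, ne_eq, EmbeddingLike.map_eq_zero_iff]
      exact fun h => hv0 (congrArg WithLp.ofLp h)
    have hxn : 0 < ‖x‖ := norm_pos_iff.mpr hx0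
    have hEx : Matrix.toEuclideanCLM (𝕜 := ℂ) E x = (μ : ℂ) • Matrix.toEuclideanCLM (𝕜 := ℂ) M x := by
      rw [hx, WithLp.equiv_symm_apply, Matrix.toEuclideanCLM_toLp, Matrix.toEuclideanCLM_toLp]
      rw [hEv]
      rfl
    have hnormE : ‖μ‖ * ‖Matrix.toEuclideanCLM (𝕜 := ℂ) M x‖
        = ‖Matrix.toEuclideanCLM (𝕜 := ℂ) E x‖ := by
      rw [hEx, norm_smul]
    have hlow := norm_mulVec_lb M σ hσ hσpos x
    have hup : ‖Matrix.toEuclideanCLM (𝕜 := ℂ) E x‖ ≤ σ / (2 * k) * ‖x‖ :=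
      le_trans (ContinuousLinearMap.le_opNorm _ x) (mul_le_mul_of_nonneg_right hE (norm_nonneg _))
    have hchain : ‖μ‖ * (σ * ‖x‖) ≤ σ / (2 * k) * ‖x‖ := by
      calc ‖μ‖ * (σ * ‖x‖)
          ≤ ‖μ‖ * ‖Matrix.toEuclideanCLM (𝕜 := ℂ) M x‖ :=
            mul_le_mul_of_nonneg_left hlow (norm_nonneg μ)
        _ = ‖Matrix.toEuclideanCLM (𝕜 := ℂ) E x‖ := hnormE
        _ ≤ σ / (2 * k) * ‖x‖ := hup
    have h2 : ‖μ‖ * σ ≤ σ / (2 * k) := by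
      have := (mul_le_mul_iff_of_pos_right hxn).mp (by linarith [hchain] : ‖μ‖ * σ * ‖x‖ ≤ σ / (2 * k) * ‖x‖)
      exact this
    have h3 : ‖μ‖ * σ ≤ σ * (1 / (2 * (k:ℝ))) := by
      rw [div_eq_mul_one_div] at h2; exact h2
    rw [hd]
    nlinarith [h3, hσpos]
  -- product bounds
  set P := (R.map (fun μ => ‖1 + μ‖)).prod with hP
  have hbounds : (1 - d) ^ k ≤ P ∧ P ≤ (1 + d) ^ k := by
    have := prod_bounds (1 - d) (1 + d) (by linarith) (R.map (fun μ => ‖1 + μ‖)) ?_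
    · rwa [Multiset.card_map, hcard] at this
    · intro y hy
      obtain ⟨μ, hμ, rfl⟩ := Multiset.mem_map.mp hy
      have hμd := hroot μ hμ
      constructor
      · have h1 : (1:ℝ) ≤ ‖1 + μ‖ + ‖μ‖ := by
          have h0 := norm_add_le (1 + μ) (-μ)
          simpa using h0
        linarith
      · calc ‖1 + μ‖ ≤ ‖(1:ℂ)‖ + ‖μ‖ := norm_add_le _ _
          _ ≤ 1 + d := by rw [norm_one]; linarith
  have h_half : (1:ℝ)/2 ≤ (1 - d) ^ k := by
    have hb := one_add_mul_le_pow (a := -d) (by linarith) k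
    have hkd : (k : ℝ) * d = 1/2 := by
      rw [hd]; field_simp
    calc (1:ℝ)/2 = 1 + k * (-d) := by rw [mul_neg, hkd]; ring
      _ ≤ (1 + -d) ^ k := hb
      _ = (1 - d) ^ k := by ring_nf
  have h_two : (1 + d) ^ k ≤ 2 := by
    have h1 : (1 + d) ^ k * (1 - d) ^ k ≤ 1 := by
      rw [← mul_pow]
      apply pow_le_one₀ (by nlinarith) (by nlinarith)
    nlinarith [pow_nonneg (by linarith : (0:ℝ) ≤ 1 + d) k]
  have hPlow : (1:ℝ)/2 ≤ P := le_trans h_half hbounds.1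
  have hPhigh : P ≤ 2 := le_trans hbounds.2 h_two
  have hPpos : 0 < P := by linarith
  -- conclude
  have hMabs : 0 < ‖M.det‖ :=
    norm_pos_iff.mpr hM.ne_zero
  have hratio : ‖M.det‖ / ‖(M + E).det‖ = 1 / P := by
    have h2 : P ≠ 0 := hPpos.ne'
    rw [hdet, norm_mul, habs1N]
    field_simp
  rw [hratio]
  constructor
  · rw [div_le_div_iff₀ (by norm_num) hPpos]; linarith
  · rw [div_le_iff₀ hPpos]; linarith
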